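/- In ℝ^10 with coordinates indexed by 2-element subsets of {1,…,5}, define v(I)_{jk} = 1 if |I ∩ {j,k}| = 1 and 0 otherwise, and d_a = v({a}); let L be the span of d_1,…,d_5. Then the six vectors v({2,3}), v({2,4}), v({2,5}), v({3,4}), v({3,5}), v({4,5}) form a minimally dependent set modulo L: some nontrivial linear combination of all six lies in L, but no nontrivial linear combination of any proper subset of them lies in L. -/

import Mathlib

/-- Index type: 2-element subsets of {1,…,n} (modeled as `Fin n`, 0-based). -/
def Pair (n : ℕ) := {s : Finset (Fin n) // s.card = 2}

noncomputable instance (n : ℕ) : Fintype (Pair n) := by unfold Pair; infer_instance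

/-- The vector v(I): coordinate at the pair {j,k} is 1 iff |I ∩ {j,k}| = 1. -/
def v (n : ℕ) (I : Finset (Fin n)) : Pair n → ℝ :=
  fun s => if (I ∩ s.val).card = 1 then 1 else 0

/-- d_a = v({a}). -/
def d (n : ℕ) (a : Fin n) : Pair n → ℝ := v n {a}

/-- The six rays of the Psi-class ψ₁ in M_{0,5} (ends modeled 0-based):
the vectors v({i,j}) for {i,j} ⊆ {2,3,4,5}. -/
def w : Fin 6 → (Pair 5 → ℝ) :=
  ![v 5 {1, 2}, v 5 {1, 3}, v 5 {1, 4}, v 5 {2, 3}, v 5 {2, 4}, v 5 {3, 4}]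

set_option maxHeartbeats 2000000 in
/-- The six vectors form a minimally dependent set modulo L = span(d₁,…,d₅). -/
theorem psi_class_minimally_dependent :
    (∃ c : Fin 6 → ℝ, c ≠ 0 ∧
        ∑ i, c i • w i ∈ Submodule.span ℝ (Set.range (d 5))) ∧
    ∀ S : Finset (Fin 6), S ≠ Finset.univ →
      ∀ c : Fin 6 → ℝ, (∀ i ∉ S, c i = 0) →
        ∑ i, c i • w i ∈ Submodule.span ℝ (Set.range (d 5)) → c = 0 := by
  constructor
  · refine ⟨fun _ => 1, ?_, ?_⟩
    · intro h
      have := congrFun h 0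
      norm_num at this
    · have hw0 : w 0 = v 5 {1, 2} := rfl
      have hw1 : w 1 = v 5 {1, 3} := rfl
      have hw2 : w 2 = v 5 {1, 4} := rfl
      have hw3 : w 3 = v 5 {2, 3} := rfl
      have hw4 : w 4 = v 5 {2, 4} := rfl
      have hw5 : w 5 = v 5 {3, 4} := rfl
      have key : ∑ i, (1 : ℝ) • w i =
          d 5 0 + ((2 : ℝ) • d 5 1 + ((2 : ℝ) • d 5 2 + ((2 : ℝ) • d 5 3 + (2 : ℝ) • d 5 4))) := by
        funext s
        simp only [Finset.sum_apply, Pi.add_apply, Pi.smul_apply]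
        obtain ⟨s, hs⟩ := s
        obtain ⟨a, b, hab, rfl⟩ := Finset.card_eq_two.mp hs
        fin_cases a <;> fin_cases b <;>
          simp_all (config := { decide := true }) [hw0, hw1, hw2, hw3, hw4, hw5, v, d,
            Fin.sum_univ_six] <;> norm_num
      rw [key]
      have hd : ∀ a : Fin 5, d 5 a ∈ Submodule.span ℝ (Set.range (d 5)) :=
        fun a => Submodule.subset_span ⟨a, rfl⟩
      exact Submodule.add_mem _ (hd 0) (Submodule.add_mem _ (Submodule.smul_mem _ _ (hd 1))
        (Submodule.add_mem _ (Submodule.smul_mem _ _ (hd 2))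
          (Submodule.add_mem _ (Submodule.smul_mem _ _ (hd 3)) (Submodule.smul_mem _ _ (hd 4)))))
  · intro S hS c hc hmem
    obtain ⟨j, hj⟩ : ∃ j, j ∉ S := by
      by_contra h
      push_neg at h
      exact hS (Finset.eq_univ_iff_forall.mpr h)
    have hcj := hc j hj
    rw [Submodule.mem_span_range_iff_exists_fun] at hmem
    obtain ⟨l, hl⟩ := hmem
    have E : ∀ p : Pair 5, ∑ a, l a * d 5 a p = ∑ i, c i * w i p := by
      intro p
      have := congrFun hl p
      simpa using this
    have e01 := E ⟨{0,1}, by decide⟩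
    have e02 := E ⟨{0,2}, by decide⟩
    have e03 := E ⟨{0,3}, by decide⟩
    have e04 := E ⟨{0,4}, by decide⟩
    have e12 := E ⟨{1,2}, by decide⟩
    have e13 := E ⟨{1,3}, by decide⟩
    have e14 := E ⟨{1,4}, by decide⟩
    have e23 := E ⟨{2,3}, by decide⟩
    have e24 := E ⟨{2,4}, by decide⟩
    have e34 := E ⟨{3,4}, by decide⟩
    have hw0 : w 0 = v 5 {1, 2} := rfl
    have hw1 : w 1 = v 5 {1, 3} := rfl
    have hw2 : w 2 = v 5 {1, 4} := rfl
    have hw3 : w 3 = v 5 {2, 3} := rfl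
    have hw4 : w 4 = v 5 {2, 4} := rfl
    have hw5 : w 5 = v 5 {3, 4} := rfl
    simp (config := { decide := true }) [hw0, hw1, hw2, hw3, hw4, hw5, v, d,
      Fin.sum_univ_five, Fin.sum_univ_six]
      at e01 e02 e03 e04 e12 e13 e14 e23 e24 e34
    clear hl E hc hS hw0 hw1 hw2 hw3 hw4 hw5 hj
    funext i
    show c i = 0
    fin_cases j <;>
      (first
        | have h' : c 0 = 0 := hcj
        | have h' : c 1 = 0 := hcj
        | have h' : c 2 = 0 := hcj
        | have h' : c 3 = 0 := hcj
        | have h' : c 4 = 0 := hcj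
        | have h' : c 5 = 0 := hcj) <;>
      fin_cases i <;>
      (first
        | show c 0 = 0
        | show c 1 = 0
        | show c 2 = 0
        | show c 3 = 0
        | show c 4 = 0
        | show c 5 = 0) <;>
      linarith
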